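/- Let U₁, …, U_s be independent random variables, each uniformly distributed on (0,1), let r, s be positive integers with r ≤ s, and let X₀ be a random variable with the gamma distribution with shape α₀ > 0 and rate 1, independent of (U₁,…,U_s). Define Y₁ = X₀ - ∑_{i=1}^r ln U_i and Y₂ = X₀ - ∑_{i=1}^s ln(1-U_i). Then Cov(Y₁, Y₂) = α₀ + r·(1 - π²/6). -/

import Mathlib

open Real MeasureTheory ProbabilityTheory

section Aux

open Set
open scoped ENNReal NNReal

private lemma exp_neg_image' : (fun t : ℝ => rexp (-t)) '' Ioi 0 = Ioo 0 1 := by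
  ext x
  constructor
  · rintro ⟨t, ht, rfl⟩
    exact ⟨exp_pos _, by rw [exp_lt_one_iff]; simpa using ht⟩
  · rintro ⟨hx0, hx1⟩
    exact ⟨-Real.log x, by simpa using Real.log_neg hx0 hx1, by simp [Real.exp_log hx0]⟩

private lemma subst_exp_neg' (g : ℝ → ℝ) :
    (∫ x in Ioo (0:ℝ) 1, g x = ∫ t in Ioi (0:ℝ), rexp (-t) * g (rexp (-t))) ∧
    (IntegrableOn g (Ioo (0:ℝ) 1) ↔
      IntegrableOn (fun t => rexp (-t) * g (rexp (-t))) (Ioi (0:ℝ))) := by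
  have hderiv : ∀ t ∈ Ioi (0:ℝ), HasDerivWithinAt (fun t : ℝ => rexp (-t)) (-rexp (-t)) (Ioi 0) t := by
    intro t _
    simpa [Function.comp_def] using ((Real.hasDerivAt_exp (-t)).comp t (hasDerivAt_neg t)).hasDerivWithinAt
  have hinj : InjOn (fun t : ℝ => rexp (-t)) (Ioi 0) :=
    fun a _ b _ h => by simpa using Real.exp_injective h
  have habs : ∀ t : ℝ, |(-rexp (-t))| = rexp (-t) := fun t => by
    rw [abs_neg, abs_of_pos (exp_pos _)]
  constructor
  · rw [← exp_neg_image',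
      integral_image_eq_integral_abs_deriv_smul measurableSet_Ioi hderiv hinj g]
    simp only [habs, smul_eq_mul]
  · rw [← exp_neg_image',
      integrableOn_image_iff_integrableOn_abs_deriv_smul measurableSet_Ioi hderiv hinj g]
    simp only [habs, smul_eq_mul]

private lemma subst_reflect' (g : ℝ → ℝ) :
    (∫ x in Ioo (0:ℝ) 1, g x = ∫ t in Ioo (0:ℝ) 1, g (1 - t)) ∧
    (IntegrableOn g (Ioo (0:ℝ) 1) ↔
      IntegrableOn (fun t => g (1 - t)) (Ioo (0:ℝ) 1)) := by
  have himg : (fun t : ℝ => 1 - t) '' Ioo 0 1 = Ioo 0 1 := by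
    ext x
    constructor
    · rintro ⟨t, ⟨h1, h2⟩, rfl⟩; constructor <;> simp <;> linarith
    · rintro ⟨hx0, hx1⟩; exact ⟨1 - x, ⟨by linarith, by linarith⟩, by ring⟩
  have hderiv : ∀ t ∈ Ioo (0:ℝ) 1, HasDerivWithinAt (fun t : ℝ => 1 - t) (-1) (Ioo 0 1) t := by
    intro t _
    simpa using ((hasDerivAt_id t).const_sub 1).hasDerivWithinAt
  have hinj : InjOn (fun t : ℝ => 1 - t) (Ioo 0 1) := fun a _ b _ h => by
    dsimp at h; linarith
  constructor
  · conv_lhs => rw [← himg,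
      integral_image_eq_integral_abs_deriv_smul measurableSet_Ioo hderiv hinj g]
    simp
  · conv_lhs => rw [← himg,
      integrableOn_image_iff_integrableOn_abs_deriv_smul measurableSet_Ioo hderiv hinj g]
    simp

private lemma integrand_eq' (n : ℕ) (t : ℝ) :
    rexp (-t) * ((rexp (-t))^n * Real.log (rexp (-t)))
      = -(t * rexp (-(((n:ℝ)+1) * t))) := by
  have h : rexp (-t) * rexp ((n:ℝ) * (-t)) = rexp (-(((n:ℝ)+1) * t)) := by
    rw [← Real.exp_add]; ring_nf
  calc rexp (-t) * ((rexp (-t))^n * Real.log (rexp (-t)))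
      = (rexp (-t) * rexp ((n:ℝ) * (-t))) * (-t) := by
        rw [Real.log_exp, ← Real.exp_nat_mul]; ring
    _ = -(t * rexp (-(((n:ℝ)+1) * t))) := by rw [h]; ring

private lemma intOn_mul_exp' : IntegrableOn (fun t : ℝ => t * rexp (-t)) (Ioi 0) := by
  apply (Real.GammaIntegral_convergent (by norm_num : (0:ℝ) < 2)).congr_fun ?_ measurableSet_Ioi
  intro t ht
  dsimp only
  rw [show (2:ℝ) - 1 = 1 by norm_num, Real.rpow_one]; ring

private lemma intOn_exp_integrand' (n : ℕ) :
    IntegrableOn (fun t : ℝ => -(t * rexp (-(((n:ℝ)+1) * t)))) (Ioi 0) := by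
  apply Integrable.neg
  apply Integrable.mono intOn_mul_exp'
    (Measurable.aestronglyMeasurable (measurable_id.mul (((measurable_id.const_mul _).neg).exp)))
  filter_upwards [ae_restrict_mem measurableSet_Ioi] with t ht
  have ht' : (0:ℝ) < t := ht
  have h1 : rexp (-(((n:ℝ)+1) * t)) ≤ rexp (-t) := by
    apply Real.exp_le_exp.2; nlinarith [Nat.cast_nonneg (α := ℝ) n]
  rw [Real.norm_eq_abs, Real.norm_eq_abs, abs_of_nonneg (mul_nonneg ht'.le (exp_pos _).le)]
  change |t * rexp (-(((n:ℝ)+1) * t))| ≤ t * rexp (-t)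
  rw [abs_of_nonneg (mul_nonneg ht'.le (exp_pos _).le)]
  exact mul_le_mul_of_nonneg_left h1 ht'.le

private lemma intOn_pow_log' (n : ℕ) :
    IntegrableOn (fun x : ℝ => x ^ n * Real.log x) (Ioo 0 1) := by
  rw [(subst_exp_neg' _).2]
  exact (intOn_exp_integrand' n).congr_fun
    (fun t ht => (integrand_eq' n t).symm) measurableSet_Ioi

private lemma integral_pow_log' (n : ℕ) :
    ∫ x in Ioo (0:ℝ) 1, x ^ n * Real.log x = -(1/((n:ℝ)+1)^2) := by
  rw [(subst_exp_neg' _).1]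
  calc ∫ t in Ioi (0:ℝ), rexp (-t) * ((rexp (-t))^n * Real.log (rexp (-t)))
      = ∫ t in Ioi (0:ℝ), -(t ^ ((2:ℝ)-1) * rexp (-(((n:ℝ)+1) * t))) := by
        apply setIntegral_congr_fun measurableSet_Ioi
        intro t ht
        dsimp only
        rw [integrand_eq' n t, show (2:ℝ) - 1 = 1 by norm_num, Real.rpow_one]
    _ = -(1/((n:ℝ)+1)^2) := by
        rw [integral_neg, integral_rpow_mul_exp_neg_mul_Ioi (by norm_num) (by positivity),
          Real.Gamma_two, mul_one, show ((2:ℝ)) = ((2:ℕ):ℝ) by norm_num, Real.rpow_natCast,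
          div_pow, one_pow]

private lemma intOn_log' : IntegrableOn Real.log (Ioo (0:ℝ) 1) := by
  have := intOn_pow_log' 0
  simpa using this

private lemma integral_log_Ioo' : ∫ x in Ioo (0:ℝ) 1, Real.log x = -1 := by
  have := integral_pow_log' 0
  simpa using this

private noncomputable def glog' (n : ℕ) : ℝ → ℝ :=
  fun x => (-Real.log x) * (x ^ (n+1) / ((n:ℝ)+1))

private lemma glog_eq' (n : ℕ) :
    glog' n = fun x => (-(1/((n:ℝ)+1))) * (x ^ (n+1) * Real.log x) := by
  funext x; simp only [glog']; ring

private lemma glog_integrable' (n : ℕ) : IntegrableOn (glog' n) (Ioo (0:ℝ) 1) := by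
  rw [glog_eq']; exact (intOn_pow_log' (n+1)).const_mul _

private lemma glog_integral' (n : ℕ) :
    ∫ x in Ioo (0:ℝ) 1, glog' n x = 1/(((n:ℝ)+1)*((n:ℝ)+2)^2) := by
  rw [glog_eq', integral_const_mul, integral_pow_log' (n+1)]
  have h1 : ((n:ℝ)+1) ≠ 0 := by positivity
  have h2 : ((n:ℝ)+2) ≠ 0 := by positivity
  push_cast
  field_simp
  ring_nf

private lemma glog_nonneg' {n : ℕ} {x : ℝ} (hx : x ∈ Ioo (0:ℝ) 1) : 0 ≤ glog' n x := by
  have h1 : Real.log x ≤ 0 := Real.log_nonpos hx.1.le hx.2.le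
  have h2 : (0:ℝ) ≤ x ^ (n+1) := pow_nonneg hx.1.le _
  have h3 : (0:ℝ) < (n:ℝ) + 1 := by positivity
  unfold glog'
  have := div_nonneg h2 h3.le
  nlinarith

private lemma glog_hasSum' {x : ℝ} (hx : x ∈ Ioo (0:ℝ) 1) :
    HasSum (fun n => glog' n x) (Real.log x * Real.log (1-x)) := by
  have habs : |x| < 1 := by rw [abs_of_pos hx.1]; exact hx.2
  have h := (Real.hasSum_pow_div_log_of_abs_lt_one habs).mul_left (-Real.log x)
  convert h using 1
  · rfl
  · rfl
  ring

private lemma c_summable' : Summable (fun n : ℕ => 1/(((n:ℝ)+1)*((n:ℝ)+2)^2)) := by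
  have h2 : Summable (fun n : ℕ => 1/((n:ℝ)+1)^2) := by
    have := (summable_nat_add_iff (f := fun n : ℕ => 1/(n:ℝ)^2) 1).2
      (Real.summable_one_div_nat_pow.2 one_lt_two)
    simpa using this
  apply Summable.of_nonneg_of_le (fun n => by positivity) ?_ h2
  intro n
  apply div_le_div_of_nonneg_left one_pos.le (by positivity)
  nlinarith [sq_nonneg ((n:ℝ)+1), Nat.cast_nonneg (α := ℝ) n]

private lemma telescope_hasSum' : HasSum (fun n : ℕ => 1/((n:ℝ)+1) - 1/((n:ℝ)+2)) 1 := by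
  rw [hasSum_iff_tendsto_nat_of_nonneg]
  · have key : ∀ N : ℕ, ∑ i ∈ Finset.range N, (1/((i:ℝ)+1) - 1/((i:ℝ)+2)) = 1 - 1/((N:ℝ)+1) := by
      intro N
      have h := Finset.sum_range_sub' (f := fun i : ℕ => 1/((i:ℝ)+1)) N
      calc ∑ i ∈ Finset.range N, (1/((i:ℝ)+1) - 1/((i:ℝ)+2))
          = ∑ i ∈ Finset.range N, ((fun j : ℕ => 1/((j:ℝ)+1)) i
              - (fun j : ℕ => 1/((j:ℝ)+1)) (i+1)) :=
            Finset.sum_congr rfl (fun i _ => by push_cast; ring)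
        _ = 1 - 1/((N:ℝ)+1) := by rw [h]; norm_num
    simp only [key]
    have : Filter.Tendsto (fun N : ℕ => 1/((N:ℝ)+1)) Filter.atTop (nhds 0) :=
      tendsto_one_div_add_atTop_nhds_zero_nat
    simpa using (tendsto_const_nhds (x := (1:ℝ)).sub this)
  · intro i
    have h0 : ((i:ℝ)+1) ≤ ((i:ℝ)+2) := by linarith
    have h1 : (0:ℝ) < (i:ℝ)+1 := by positivity
    have := one_div_le_one_div_of_le h1 h0
    linarith

private lemma shifted_basel' : HasSum (fun n : ℕ => 1/((n:ℝ)+2)^2) (π^2/6 - 1) := by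
  have h2 := (hasSum_nat_add_iff' (f := fun n : ℕ => 1/(n:ℝ)^2) 2).2 hasSum_zeta_two
  rw [show (fun n : ℕ => 1/((n:ℝ)+2)^2) = fun n : ℕ => 1/((((n+2):ℕ)):ℝ)^2 from
    funext fun n => by push_cast; ring]
  convert h2 using 1
  · rfl
  rw [Finset.sum_range_succ, Finset.sum_range_succ]
  norm_num

private lemma c_hasSum' : HasSum (fun n : ℕ => 1/(((n:ℝ)+1)*((n:ℝ)+2)^2)) (2 - π^2/6) := by
  have h := telescope_hasSum'.sub shifted_basel'
  rw [show (fun n : ℕ => 1/(((n:ℝ)+1)*((n:ℝ)+2)^2))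
      = fun n : ℕ => (1/((n:ℝ)+1) - 1/((n:ℝ)+2)) - 1/((n:ℝ)+2)^2 from funext fun n => by
    have h1 : ((n:ℝ)+1) ≠ 0 := by positivity
    have h2 : ((n:ℝ)+2) ≠ 0 := by positivity
    field_simp
    ring]
  convert h using 1
  · rfl
  ring

private lemma intOn_log1m' : IntegrableOn (fun x : ℝ => Real.log (1-x)) (Ioo (0:ℝ) 1) :=
  (subst_reflect' Real.log).2.mp intOn_log'

private lemma integral_log1m' : ∫ x in Ioo (0:ℝ) 1, Real.log (1-x) = -1 := by
  rw [← (subst_reflect' Real.log).1]; exact integral_log_Ioo'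

private lemma intOn_log_sq' : IntegrableOn (fun x : ℝ => (Real.log x)^2) (Ioo (0:ℝ) 1) := by
  rw [(subst_exp_neg' _).2]
  apply (Real.GammaIntegral_convergent (by norm_num : (0:ℝ) < 3)).congr_fun ?_ measurableSet_Ioi
  intro t ht
  dsimp only
  rw [Real.log_exp, show (3:ℝ) - 1 = ((2:ℕ):ℝ) by norm_num, Real.rpow_natCast]
  ring

private lemma intOn_log1m_sq' : IntegrableOn (fun x : ℝ => (Real.log (1-x))^2) (Ioo (0:ℝ) 1) :=
  (subst_reflect' (fun x => (Real.log x)^2)).2.mp intOn_log_sq'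

private lemma intOn_loglog' :
    IntegrableOn (fun x : ℝ => Real.log x * Real.log (1-x)) (Ioo (0:ℝ) 1) := by
  apply Integrable.mono' ((intOn_log_sq'.add intOn_log1m_sq').div_const 2)
  · exact (Real.measurable_log.mul
      (Real.measurable_log.comp (measurable_const.sub measurable_id))).aestronglyMeasurable
  · filter_upwards with x
    rw [Real.norm_eq_abs, abs_mul]
    simp only [Pi.add_apply]
    nlinarith [sq_nonneg (|Real.log x| - |Real.log (1-x)|), sq_abs (Real.log x),
      sq_abs (Real.log (1-x)), abs_nonneg (Real.log x), abs_nonneg (Real.log (1-x))]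

private lemma integral_loglog' :
    ∫ x in Ioo (0:ℝ) 1, Real.log x * Real.log (1-x) = 2 - π^2/6 := by
  have hnorm : ∀ n : ℕ, ∫ x in Ioo (0:ℝ) 1, ‖glog' n x‖ = 1/(((n:ℝ)+1)*((n:ℝ)+2)^2) := by
    intro n
    rw [← glog_integral' n]
    apply setIntegral_congr_fun measurableSet_Ioo
    intro x hx
    exact Real.norm_of_nonneg (glog_nonneg' hx)
  have hsum : Summable (fun n : ℕ => ∫ x in Ioo (0:ℝ) 1, ‖glog' n x‖) := by
    rw [show (fun n : ℕ => ∫ x in Ioo (0:ℝ) 1, ‖glog' n x‖)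
        = fun n : ℕ => 1/(((n:ℝ)+1)*((n:ℝ)+2)^2) from funext hnorm]
    exact c_summable'
  have key := integral_tsum_of_summable_integral_norm
    (fun n => glog_integrable' n) hsum
  calc ∫ x in Ioo (0:ℝ) 1, Real.log x * Real.log (1-x)
      = ∫ x in Ioo (0:ℝ) 1, ∑' n, glog' n x := by
        apply setIntegral_congr_fun measurableSet_Ioo
        intro x hx
        exact (glog_hasSum' hx).tsum_eq.symm
    _ = ∑' n, ∫ x in Ioo (0:ℝ) 1, glog' n x := key.symm
    _ = 2 - π^2/6 := by
        rw [show (fun n : ℕ => ∫ x in Ioo (0:ℝ) 1, glog' n x)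
            = fun n : ℕ => 1/(((n:ℝ)+1)*((n:ℝ)+2)^2) from funext glog_integral']
        exact c_hasSum'.tsum_eq

private lemma gamma_aux' (α : ℝ) (hα : 0 < α) (k : ℕ) :
    Integrable (fun x : ℝ => x ^ k) (gammaMeasure α 1) ∧
    ∫ x, x ^ k ∂(gammaMeasure α 1) = Real.Gamma (α + k) / Real.Gamma α := by
  have hd : gammaMeasure α 1
      = volume.withDensity (fun x => ((Real.toNNReal (gammaPDFReal α 1 x)) : ℝ≥0∞)) := rfl
  have haem : AEMeasurable (fun x => Real.toNNReal (gammaPDFReal α 1 x)) volume :=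
    ((measurable_gammaPDFReal α 1).real_toNNReal).aemeasurable
  set D : ℝ → ℝ := (Ioi 0).indicator
    (fun x => (1/Real.Gamma α) * (rexp (-x) * x ^ (α + (k:ℝ) - 1))) with hD_def
  have h0 : ∀ᵐ x : ℝ, x ≠ 0 := by
    rw [ae_iff]
    simp only [ne_eq, not_not]
    have h00 : {x : ℝ | x = 0} = {0} := by ext y; simp
    rw [h00]
    exact measure_singleton 0
  have hae : (fun x => Real.toNNReal (gammaPDFReal α 1 x) • (x ^ k : ℝ)) =ᵐ[volume] D := by
    filter_upwards [h0] with x hx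
    rcases lt_or_gt_of_ne hx with hneg | hpos
    · have h1 : gammaPDFReal α 1 x = 0 := by
        unfold gammaPDFReal; rw [if_neg (not_le.mpr hneg)]
      rw [h1]
      simp [hD_def, indicator_of_notMem (by simpa using hneg.le : x ∉ Ioi (0:ℝ))]
    · have h1 : gammaPDFReal α 1 x = 1/Real.Gamma α * x ^ (α-1) * rexp (-x) := by
        unfold gammaPDFReal
        rw [if_pos hpos.le, Real.one_rpow, one_mul]
      have hnn : 0 ≤ gammaPDFReal α 1 x := by
        rw [h1]
        have := Real.Gamma_pos_of_pos hα
        positivity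
      rw [NNReal.smul_def, smul_eq_mul, Real.coe_toNNReal _ hnn, h1,
        hD_def, indicator_of_mem (mem_Ioi.mpr hpos)]
      have hxk : (x:ℝ) ^ k = x ^ ((k:ℕ):ℝ) := (Real.rpow_natCast x k).symm
      rw [hxk, show α + (k:ℝ) - 1 = (α - 1) + (k:ℝ) by ring, Real.rpow_add hpos]
      ring
  have hDint : Integrable D volume := by
    rw [hD_def, integrable_indicator_iff measurableSet_Ioi]
    have h1 := (Real.GammaIntegral_convergent (by positivity : (0:ℝ) < α + k))
    exact h1.const_mul (1/Real.Gamma α)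
  constructor
  · rw [hd, integrable_withDensity_iff_integrable_smul₀ haem]
    exact hDint.congr hae.symm
  · rw [hd, integral_withDensity_eq_integral_smul₀ haem]
    rw [integral_congr_ae hae, hD_def, integral_indicator measurableSet_Ioi,
      integral_const_mul, ← Real.Gamma_eq_integral (by positivity : (0:ℝ) < α + k)]
    ring

private lemma gamma_integrable_one' (α : ℝ) (hα : 0 < α) :
    Integrable (fun x : ℝ => x) (gammaMeasure α 1) := by
  have := (gamma_aux' α hα 1).1
  simpa using this

private lemma gamma_integral_one' (α : ℝ) (hα : 0 < α) :
    ∫ x, x ∂(gammaMeasure α 1) = α := by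
  have h := (gamma_aux' α hα 1).2
  rw [show (fun x : ℝ => x ^ 1) = fun x : ℝ => x from funext fun x => pow_one x] at h
  rw [h, Nat.cast_one, Real.Gamma_add_one hα.ne', mul_div_assoc,
    div_self (Real.Gamma_pos_of_pos hα).ne', mul_one]

private lemma gamma_integrable_sq' (α : ℝ) (hα : 0 < α) :
    Integrable (fun x : ℝ => x * x) (gammaMeasure α 1) := by
  have h := (gamma_aux' α hα 2).1
  exact h.congr (by filter_upwards with x; rw [sq])

private lemma gamma_integral_sq' (α : ℝ) (hα : 0 < α) :
    ∫ x, x * x ∂(gammaMeasure α 1) = (α + 1) * α := by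
  have h := (gamma_aux' α hα 2).2
  rw [show (fun x : ℝ => x ^ 2) = fun x : ℝ => x * x from funext fun x => sq x] at h
  rw [h, Nat.cast_ofNat, show α + 2 = (α + 1) + 1 by ring,
    Real.Gamma_add_one (by positivity : α + 1 ≠ 0), Real.Gamma_add_one hα.ne']
  field_simp

end Aux

theorem stmt_3 {Ω : Type*} [MeasureSpace Ω] [IsProbabilityMeasure (ℙ : Measure Ω)]
    (r s : ℕ) (hr : 0 < r) (hrs : r ≤ s)
    (U : Fin s → Ω → ℝ) (hU : ∀ i, Measurable (U i))
    (hunif : ∀ i, Measure.map (U i) ℙ = volume.restrict (Set.Ioo (0:ℝ) 1))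
    (hindepU : iIndepFun U ℙ)
    (α₀ : ℝ) (hα₀ : 0 < α₀)
    (X₀ : Ω → ℝ) (hX₀ : Measurable X₀)
    (hgamma : Measure.map X₀ ℙ = gammaMeasure α₀ 1)
    (hindep : IndepFun X₀ (fun ω => fun i => U i ω) ℙ)
    (Y₁ Y₂ : Ω → ℝ)
    (hY₁ : Y₁ = fun ω => X₀ ω - ∑ i ∈ Finset.univ.filter (fun i : Fin s => (i : ℕ) < r),
      Real.log (U i ω))
    (hY₂ : Y₂ = fun ω => X₀ ω - ∑ i : Fin s, Real.log (1 - U i ω)) :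
    (∫ ω, Y₁ ω * Y₂ ω ∂ℙ) - (∫ ω, Y₁ ω ∂ℙ) * (∫ ω, Y₂ ω ∂ℙ)
      = α₀ + r * (1 - Real.pi ^ 2 / 6) := by
  classical
  set F : Finset (Fin s) := Finset.univ.filter (fun i : Fin s => (i : ℕ) < r) with hF
  -- cardinality of F
  have hFcard : F.card = r := by
    have h : F = Finset.map (Fin.castLEEmb hrs) Finset.univ := by
      ext i
      simp only [hF, Finset.mem_filter, Finset.mem_univ, true_and, Finset.mem_map,
        Fin.castLEEmb, Function.Embedding.coeFn_mk]
      constructor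
      · intro hi
        exact ⟨⟨(i:ℕ), hi⟩, by ext; simp⟩
      · rintro ⟨j, rfl⟩
        simpa using j.isLt
    rw [h, Finset.card_map, Finset.card_univ, Fintype.card_fin]
  -- measurability of building blocks
  have hBmeas : Measurable (fun x : ℝ => Real.log (1 - x)) :=
    Real.measurable_log.comp (measurable_const.sub measurable_id)
  have hABmeas : Measurable (fun x : ℝ => Real.log x * Real.log (1 - x)) :=
    Real.measurable_log.mul hBmeas
  -- integrability and expectations of log (U i)
  have hiA : ∀ i, Integrable (fun ω => Real.log (U i ω)) ℙ := by
    intro i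
    have h := integrable_map_measure (μ := (ℙ : Measure Ω)) (f := U i) (g := Real.log)
      Real.measurable_log.aestronglyMeasurable (hU i).aemeasurable
    rw [hunif i] at h
    exact h.mp intOn_log'
  have hEA : ∀ i, ∫ ω, Real.log (U i ω) ∂ℙ = -1 := by
    intro i
    have h := integral_map (μ := (ℙ : Measure Ω)) (φ := U i) (hU i).aemeasurable
      (f := Real.log) Real.measurable_log.aestronglyMeasurable
    rw [hunif i] at h
    rw [← h]
    exact integral_log_Ioo'
  -- integrability and expectations of log (1 - U i)
  have hiB : ∀ i, Integrable (fun ω => Real.log (1 - U i ω)) ℙ := by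
    intro i
    have h := integrable_map_measure (μ := (ℙ : Measure Ω)) (f := U i)
      (g := fun x => Real.log (1 - x)) hBmeas.aestronglyMeasurable (hU i).aemeasurable
    rw [hunif i] at h
    exact h.mp intOn_log1m'
  have hEB : ∀ i, ∫ ω, Real.log (1 - U i ω) ∂ℙ = -1 := by
    intro i
    have h := integral_map (μ := (ℙ : Measure Ω)) (φ := U i) (hU i).aemeasurable
      (f := fun x => Real.log (1 - x)) hBmeas.aestronglyMeasurable
    rw [hunif i] at h
    rw [← h]
    exact integral_log1m'
  -- the diagonal products
  have hiABdiag : ∀ i, Integrable (fun ω => Real.log (U i ω) * Real.log (1 - U i ω)) ℙ := by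
    intro i
    have h := integrable_map_measure (μ := (ℙ : Measure Ω)) (f := U i)
      (g := fun x => Real.log x * Real.log (1 - x)) hABmeas.aestronglyMeasurable
      (hU i).aemeasurable
    rw [hunif i] at h
    exact h.mp intOn_loglog'
  have hEABdiag : ∀ i, ∫ ω, Real.log (U i ω) * Real.log (1 - U i ω) ∂ℙ = 2 - π^2/6 := by
    intro i
    have h := integral_map (μ := (ℙ : Measure Ω)) (φ := U i) (hU i).aemeasurable
      (f := fun x => Real.log x * Real.log (1 - x)) hABmeas.aestronglyMeasurable
    rw [hunif i] at h
    rw [← h]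
    exact integral_loglog'
  -- independence of the transformed variables
  have hindAB : ∀ i j : Fin s, i ≠ j →
      IndepFun (fun ω => Real.log (U i ω)) (fun ω => Real.log (1 - U j ω)) ℙ := by
    intro i j hij
    exact (hindepU.indepFun hij).comp Real.measurable_log hBmeas
  have hindXB : ∀ j : Fin s, IndepFun X₀ (fun ω => Real.log (1 - U j ω)) ℙ := by
    intro j
    exact hindep.comp measurable_id (hBmeas.comp (measurable_pi_apply j))
  have hindXA : ∀ i : Fin s, IndepFun X₀ (fun ω => Real.log (U i ω)) ℙ := by
    intro i
    exact hindep.comp measurable_id (Real.measurable_log.comp (measurable_pi_apply i))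
  -- moments of X₀
  have hiX : Integrable X₀ ℙ := by
    have h := integrable_map_measure (μ := (ℙ : Measure Ω)) (f := X₀) (g := fun x : ℝ => x)
      aestronglyMeasurable_id hX₀.aemeasurable
    rw [hgamma] at h
    exact h.mp (gamma_integrable_one' α₀ hα₀)
  have hEX : ∫ ω, X₀ ω ∂ℙ = α₀ := by
    have h := integral_map (μ := (ℙ : Measure Ω)) (φ := X₀) hX₀.aemeasurable
      (f := fun x : ℝ => x) aestronglyMeasurable_id
    rw [hgamma] at h
    rw [← h]
    exact gamma_integral_one' α₀ hα₀
  have hiX2 : Integrable (fun ω => X₀ ω * X₀ ω) ℙ := by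
    have h := integrable_map_measure (μ := (ℙ : Measure Ω)) (f := X₀)
      (g := fun x : ℝ => x * x) (measurable_id.mul measurable_id).aestronglyMeasurable
      hX₀.aemeasurable
    rw [hgamma] at h
    exact h.mp (gamma_integrable_sq' α₀ hα₀)
  have hEX2 : ∫ ω, X₀ ω * X₀ ω ∂ℙ = (α₀ + 1) * α₀ := by
    have h := integral_map (μ := (ℙ : Measure Ω)) (φ := X₀) hX₀.aemeasurable
      (f := fun x : ℝ => x * x) (measurable_id.mul measurable_id).aestronglyMeasurable
    rw [hgamma] at h
    rw [← h]
    exact gamma_integral_sq' α₀ hα₀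
  -- integrability of products
  have hiXB : ∀ j, Integrable (fun ω => X₀ ω * Real.log (1 - U j ω)) ℙ := fun j =>
    (hindXB j).integrable_mul hiX (hiB j)
  have hiAX : ∀ i, Integrable (fun ω => Real.log (U i ω) * X₀ ω) ℙ := fun i =>
    ((hindXA i).symm).integrable_mul (hiA i) hiX
  have hiAB : ∀ i j : Fin s, Integrable (fun ω => Real.log (U i ω) * Real.log (1 - U j ω)) ℙ := by
    intro i j
    by_cases hij : i = j
    · subst hij; exact hiABdiag i
    · exact (hindAB i j hij).integrable_mul (hiA i) (hiB j)
  -- expectations of products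
  have hEXB : ∀ j, ∫ ω, X₀ ω * Real.log (1 - U j ω) ∂ℙ = -α₀ := by
    intro j
    have h := (hindXB j).integral_mul_eq_mul_integral hX₀.aestronglyMeasurable
      (hBmeas.comp (hU j)).aestronglyMeasurable
    rw [show (X₀ * fun ω => Real.log (1 - U j ω)) = fun ω => X₀ ω * Real.log (1 - U j ω)
      from rfl] at h
    rw [h, hEX, hEB j]
    ring
  have hEAX : ∀ i, ∫ ω, Real.log (U i ω) * X₀ ω ∂ℙ = -α₀ := by
    intro i
    have h := ((hindXA i).symm).integral_mul_eq_mul_integral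
      (Real.measurable_log.comp (hU i)).aestronglyMeasurable hX₀.aestronglyMeasurable
    rw [show ((fun ω => Real.log (U i ω)) * X₀) = fun ω => Real.log (U i ω) * X₀ ω
      from rfl] at h
    rw [h, hEX, hEA i]
    ring
  have hEAB : ∀ i j : Fin s, ∫ ω, Real.log (U i ω) * Real.log (1 - U j ω) ∂ℙ
      = if i = j then 2 - π^2/6 else 1 := by
    intro i j
    by_cases hij : i = j
    · subst hij; rw [if_pos rfl]; exact hEABdiag i
    · rw [if_neg hij]
      have h := (hindAB i j hij).integral_mul_eq_mul_integral
        (Real.measurable_log.comp (hU i)).aestronglyMeasurable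
        (hBmeas.comp (hU j)).aestronglyMeasurable
      rw [show ((fun ω => Real.log (U i ω)) * fun ω => Real.log (1 - U j ω))
        = fun ω => Real.log (U i ω) * Real.log (1 - U j ω) from rfl] at h
      rw [h, hEA i, hEB j]
      ring
  -- first moments of Y₁ and Y₂
  have hsum1 : ∫ ω, Y₁ ω ∂ℙ = α₀ + r := by
    rw [hY₁]
    rw [integral_sub hiX (integrable_finset_sum _ (fun i _ => hiA i)),
      integral_finset_sum _ (fun i _ => hiA i), hEX]
    have h : ∑ i ∈ F, ∫ ω, Real.log (U i ω) ∂ℙ = -(r:ℝ) := by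
      rw [Finset.sum_congr rfl (fun i _ => hEA i), Finset.sum_const, hFcard]
      simp
    rw [h]
    ring
  have hsum2 : ∫ ω, Y₂ ω ∂ℙ = α₀ + s := by
    rw [hY₂]
    rw [integral_sub hiX (integrable_finset_sum _ (fun i _ => hiB i)),
      integral_finset_sum _ (fun i _ => hiB i), hEX]
    have h : ∑ i : Fin s, ∫ ω, Real.log (1 - U i ω) ∂ℙ = -(s:ℝ) := by
      rw [Finset.sum_congr rfl (fun i _ => hEB i), Finset.sum_const, Finset.card_univ,
        Fintype.card_fin]
      simp
    rw [h]
    ring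
  -- second moment
  have hexp : (fun ω => Y₁ ω * Y₂ ω) = fun ω =>
      X₀ ω * X₀ ω - (∑ j : Fin s, X₀ ω * Real.log (1 - U j ω))
        - (∑ i ∈ F, Real.log (U i ω) * X₀ ω)
        + ∑ i ∈ F, ∑ j : Fin s, Real.log (U i ω) * Real.log (1 - U j ω) := by
    funext ω
    rw [hY₁, hY₂]
    dsimp only
    rw [← Finset.mul_sum, ← Finset.sum_mul, ← Finset.sum_mul_sum]
    ring
  have i2 : Integrable (fun ω => ∑ j : Fin s, X₀ ω * Real.log (1 - U j ω)) ℙ :=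
    integrable_finset_sum _ (fun j _ => hiXB j)
  have i3 : Integrable (fun ω => ∑ i ∈ F, Real.log (U i ω) * X₀ ω) ℙ :=
    integrable_finset_sum _ (fun i _ => hiAX i)
  have i4 : Integrable
      (fun ω => ∑ i ∈ F, ∑ j : Fin s, Real.log (U i ω) * Real.log (1 - U j ω)) ℙ :=
    integrable_finset_sum _ (fun i _ => integrable_finset_sum _ (fun j _ => hiAB i j))
  have hprod : ∫ ω, Y₁ ω * Y₂ ω ∂ℙ
      = (α₀ + 1) * α₀ + s * α₀ + r * α₀ + r * (s + (2 - π^2/6 - 1)) := by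
    rw [hexp]
    have ha := integral_add ((hiX2.sub i2).sub i3) i4
    simp only [Pi.sub_apply] at ha
    have hb := integral_sub (hiX2.sub i2) i3
    simp only [Pi.sub_apply] at hb
    have hc := integral_sub hiX2 i2
    rw [ha, hb, hc, hEX2,
      integral_finset_sum _ (fun j _ => hiXB j),
      integral_finset_sum _ (fun i _ => hiAX i),
      integral_finset_sum _ (fun i _ => integrable_finset_sum _ (fun j _ => hiAB i j))]
    have h2 : ∑ j : Fin s, ∫ ω, X₀ ω * Real.log (1 - U j ω) ∂ℙ = -((s:ℝ) * α₀) := by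
      rw [Finset.sum_congr rfl (fun j _ => hEXB j), Finset.sum_const, Finset.card_univ,
        Fintype.card_fin]
      simp
    have h3 : ∑ i ∈ F, ∫ ω, Real.log (U i ω) * X₀ ω ∂ℙ = -((r:ℝ) * α₀) := by
      rw [Finset.sum_congr rfl (fun i _ => hEAX i), Finset.sum_const, hFcard]
      simp
    have h4 : ∑ i ∈ F, ∫ ω, (∑ j : Fin s, Real.log (U i ω) * Real.log (1 - U j ω)) ∂ℙ
        = (r:ℝ) * (s + (2 - π^2/6 - 1)) := by
      have hinner : ∀ i : Fin s, ∫ ω, (∑ j : Fin s, Real.log (U i ω) * Real.log (1 - U j ω)) ∂ℙ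
          = (s:ℝ) + (2 - π^2/6 - 1) := by
        intro i
        rw [integral_finset_sum _ (fun j _ => hiAB i j),
          Finset.sum_congr rfl (fun j _ => hEAB i j)]
        calc ∑ j : Fin s, (if i = j then 2 - π^2/6 else (1:ℝ))
            = ∑ j : Fin s, ((1:ℝ) + if i = j then 2 - π^2/6 - 1 else 0) :=
              Finset.sum_congr rfl (fun j _ => by split_ifs <;> ring)
          _ = (s:ℝ) + (2 - π^2/6 - 1) := by
              rw [Finset.sum_add_distrib, Finset.sum_const, Finset.sum_ite_eq,
                Finset.card_univ]
              simp
      rw [Finset.sum_congr rfl (fun i _ => hinner i), Finset.sum_const, hFcard]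
      simp
      ring
    rw [h2, h3, h4]
    ring
  rw [hprod, hsum1, hsum2]
  ring
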